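/- Let k ≥ 3 be an integer, R > 0, ξ = 2π/(3k) and r = R·cos ξ, and let P_0,…,P_{k−1} be the pearl regions. If x ∈ ℝ^2 is a (k,R)-tiara for distinct points x_1,…,x_m (all distinct from x), then in the Gabriel graph of the point set {x, x_1,…,x_m} the degree of x is at least k. -/

import Mathlib

open MeasureTheory Real

noncomputable section

/-- The Euclidean plane. -/
abbrev E2 := EuclideanSpace ℝ (Fin 2)

/-- The polar angle of a point of the plane, normalized to lie in `[0, 2π)` for
nonzero points. -/
def polarAngle (z : E2) : ℝ :=
  if Complex.arg ⟨z 0, z 1⟩ < 0 then Complex.arg ⟨z 0, z 1⟩ + 2 * π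
  else Complex.arg ⟨z 0, z 1⟩

/-- With `ξ = 2π/(3k)` and `r = R cos ξ`, the `i`-th pearl region is the set of points
`z` with `r ≤ |z| ≤ R` whose polar angle lies in `[3iξ, (3i+2)ξ)`. -/
def pearl (k : ℕ) (R : ℝ) (i : ℕ) : Set E2 :=
  {z | R * Real.cos (2 * π / (3 * k)) ≤ ‖z‖ ∧ ‖z‖ ≤ R ∧
    polarAngle z ∈ Set.Ico (3 * i * (2 * π / (3 * k))) ((3 * i + 2) * (2 * π / (3 * k)))}

/-- Gabriel adjacency: `i` and `j` are adjacent iff no third point lies in the open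
disk whose diameter is the segment from `X i` to `X j`. -/
def gabrielAdj {n : ℕ} (X : Fin n → E2) (i j : Fin n) : Prop :=
  i ≠ j ∧ ∀ k : Fin n, k ≠ i → k ≠ j →
    dist (X i) (X j) / 2 ≤ dist (X k) (midpoint ℝ (X i) (X j))

/-- Degree of vertex `i` in the Gabriel graph of the points `X`. -/
def gabrielDeg {n : ℕ} (X : Fin n → E2) (i : Fin n) : ℕ :=
  Nat.card {j : Fin n // gabrielAdj X i j}

/-- `x` is a `(k,R)`-tiara for the points `p 0, …, p (m-1)`: exactly `k` of the points
lie in the closed disk of radius `R` centered at `x`, and each translated pearl region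
`x + P i` contains exactly one of these points. -/
def IsTiara (k : ℕ) (R : ℝ) {m : ℕ} (x : E2) (p : Fin m → E2) : Prop :=
  Nat.card {j : Fin m // dist x (p j) ≤ R} = k ∧
  ∀ i : Fin k, ∃! j : Fin m, p j - x ∈ pearl k R i

/-! ### Auxiliary lemmas -/

/-- The complexification of a point of the plane. -/
def toC (z : E2) : ℂ := ⟨z 0, z 1⟩

theorem re_conj_mul (a b : ℂ) :
    (starRingEnd ℂ a * b).re = ‖a‖ * ‖b‖ * Real.cos (b.arg - a.arg) := by
  conv_lhs => rw [← Complex.norm_mul_exp_arg_mul_I a, ← Complex.norm_mul_exp_arg_mul_I b]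
  rw [map_mul, ← Complex.exp_conj]
  simp only [Complex.conj_ofReal, map_mul, Complex.conj_I, mul_neg]
  have h1 : (↑‖a‖ * Complex.exp (-(↑a.arg * Complex.I)) *
      (↑‖b‖ * Complex.exp (↑b.arg * Complex.I))) =
      ↑(‖a‖ * ‖b‖) *
        Complex.exp (-(↑a.arg * Complex.I) + ↑b.arg * Complex.I) := by
    rw [Complex.exp_add]; push_cast; ring
  rw [h1]
  have h2 : (-(↑a.arg * Complex.I) + ↑b.arg * Complex.I) =
      ((b.arg - a.arg : ℝ) : ℂ) * Complex.I := by push_cast; ring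
  rw [h2, Complex.re_ofReal_mul, Complex.exp_ofReal_mul_I_re]

theorem norm_toC (z : E2) : ‖toC z‖ = ‖z‖ := by
  rw [EuclideanSpace.norm_eq, Complex.norm_def, Complex.normSq_mk]
  simp only [toC, Fin.sum_univ_two, Real.norm_eq_abs, sq_abs]
  ring_nf

theorem inner_toC (u v : E2) : (inner ℝ u v : ℝ) = (starRingEnd ℂ (toC u) * toC v).re := by
  rw [PiLp.inner_apply, Fin.sum_univ_two]
  simp [toC, Complex.mul_re]
  ring

theorem cos_polarAngle_sub (u v : E2) :
    Real.cos (polarAngle v - polarAngle u) = Real.cos ((toC v).arg - (toC u).arg) := by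
  have h : ∀ z : E2, polarAngle z =
      if (toC z).arg < 0 then (toC z).arg + 2*π else (toC z).arg := fun z => rfl
  rw [h, h]
  set A := (toC v).arg
  set B := (toC u).arg
  split_ifs
  · congr 1; ring
  · rw [show A + 2*π - B = (A - B) + 2*π by ring, Real.cos_add_two_pi]
  · rw [show A - (B + 2*π) = (A - B) - 2*π by ring, Real.cos_sub_two_pi]
  · rfl

/-- The inner product of two plane vectors in terms of polar coordinates. -/
theorem inner_polar (u v : E2) :
    (inner ℝ u v : ℝ) = ‖u‖ * ‖v‖ * Real.cos (polarAngle v - polarAngle u) := by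
  rw [inner_toC, re_conj_mul, norm_toC, norm_toC, cos_polarAngle_sub]

theorem cos_le_cos_of_sep {ξ d : ℝ} (hξ0 : 0 < ξ) (hξπ : ξ ≤ π)
    (h1 : ξ ≤ d) (h2 : d ≤ 2 * π - ξ) : Real.cos d ≤ Real.cos ξ := by
  rcases le_or_gt d π with hd | hd
  · exact Real.cos_le_cos_of_nonneg_of_le_pi hξ0.le hd h1
  · have : Real.cos d = Real.cos (2 * π - d) := by
      rw [show (2 * π - d) = -(d - 2*π) by ring, Real.cos_neg, Real.cos_sub_two_pi]
    rw [this]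
    exact Real.cos_le_cos_of_nonneg_of_le_pi hξ0.le (by linarith) (by linarith)

/-- One-sided separation bound for angles in two distinct pearl sectors. -/
theorem sep_bounds (k : ℕ) (hk : 0 < k) {i i' : ℕ} (hi'k : i' < k) (hii' : i < i')
    {θa θb : ℝ}
    (ha : θa ∈ Set.Ico (3 * (i:ℝ) * (2 * π / (3 * k))) ((3 * (i:ℝ) + 2) * (2 * π / (3 * k))))
    (hb : θb ∈ Set.Ico (3 * (i':ℝ) * (2 * π / (3 * k))) ((3 * (i':ℝ) + 2) * (2 * π / (3 * k)))) :
    (2 * π / (3 * k)) ≤ θb - θa ∧ θb - θa ≤ 2 * π - (2 * π / (3 * k)) := by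
  set ξ := 2 * π / (3 * (k:ℝ)) with hξdef
  have hkR : (0:ℝ) < k := by exact_mod_cast hk
  have hξ0 : 0 < ξ := by positivity
  have hconv : 3 * (k:ℝ) * ξ = 2 * π := by
    rw [hξdef]; field_simp
  have hii : (i:ℝ) + 1 ≤ (i':ℝ) := by exact_mod_cast hii'
  have hik : (i':ℝ) + 1 ≤ (k:ℝ) := by exact_mod_cast hi'k
  obtain ⟨ha1, ha2⟩ := ha
  obtain ⟨hb1, hb2⟩ := hb
  constructor
  · have key : (1:ℝ) * ξ ≤ (3 * (i':ℝ) - (3 * (i:ℝ) + 2)) * ξ :=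
      mul_le_mul_of_nonneg_right (by linarith) hξ0.le
    nlinarith
  · have key : (3 * (i':ℝ) + 2 - 3 * (i:ℝ)) * ξ ≤ (3 * (k:ℝ) - 1) * ξ :=
      mul_le_mul_of_nonneg_right (by linarith) hξ0.le
    nlinarith

theorem cos_sep (k : ℕ) (hk : 3 ≤ k) {i i' : ℕ} (hik : i < k) (hi'k : i' < k) (hne : i ≠ i')
    {θa θb : ℝ}
    (ha : θa ∈ Set.Ico (3 * (i:ℝ) * (2 * π / (3 * k))) ((3 * (i:ℝ) + 2) * (2 * π / (3 * k))))
    (hb : θb ∈ Set.Ico (3 * (i':ℝ) * (2 * π / (3 * k))) ((3 * (i':ℝ) + 2) * (2 * π / (3 * k)))) :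
    Real.cos (θb - θa) ≤ Real.cos (2 * π / (3 * k)) := by
  have hk0 : 0 < k := by omega
  have hkR : (3:ℝ) ≤ k := by exact_mod_cast hk
  have hξ0 : 0 < 2 * π / (3 * (k:ℝ)) := by positivity
  have hξπ : 2 * π / (3 * (k:ℝ)) ≤ π := by
    have h9 : 2 * π / (3 * (k:ℝ)) ≤ 2 * π / 9 :=
      div_le_div_of_nonneg_left (by positivity) (by norm_num) (by linarith)
    linarith [pi_pos]
  rcases hne.lt_or_gt with h | h
  · obtain ⟨hl, hr⟩ := sep_bounds k hk0 hi'k h ha hb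
    exact cos_le_cos_of_sep hξ0 hξπ hl hr
  · obtain ⟨hl, hr⟩ := sep_bounds k hk0 hik h hb ha
    rw [show θb - θa = -(θa - θb) by ring, Real.cos_neg]
    exact cos_le_cos_of_sep hξ0 hξπ hl hr

/-- Distinct pearl regions are disjoint. -/
theorem pearl_disjoint (k : ℕ) (hk : 0 < k) (R : ℝ) {i i' : ℕ} (hik : i < k) (hi'k : i' < k)
    {z : E2} (hi : z ∈ pearl k R i) (hi' : z ∈ pearl k R i') : i = i' := by
  by_contra hne
  have hkR : (0:ℝ) < k := by exact_mod_cast hk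
  have hξ0 : 0 < 2 * π / (3 * (k:ℝ)) := by positivity
  obtain ⟨-, -, h1, h2⟩ := hi
  obtain ⟨-, -, h3, h4⟩ := hi'
  rcases Nat.lt_or_ge i i' with h | h
  · have : ((i:ℝ) + 1) ≤ (i':ℝ) := by exact_mod_cast h
    nlinarith
  · have h' : i' < i := by omega
    have : ((i':ℝ) + 1) ≤ (i:ℝ) := by exact_mod_cast h'
    nlinarith

/-- If `x` is a `(k,R)`-tiara for distinct points `p 0, …, p (m-1)`
(all distinct from `x`), with `k ≥ 3` and `R > 0`, then in the Gabriel graph of the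
point set `{x, p 0, …, p (m-1)}` the degree of `x` is at least `k`. -/
theorem tiara_gabriel_degree (k m : ℕ) (hk : 3 ≤ k) (R : ℝ) (hR : 0 < R)
    (x : E2) (p : Fin m → E2) (hinj : Function.Injective p) (hx : ∀ j, p j ≠ x)
    (htiara : IsTiara k R x p) :
    k ≤ gabrielDeg (Fin.cons x p) 0 := by
  obtain ⟨hcard, hpearl⟩ := htiara
  have hk0 : 0 < k := by omega
  -- choose the pearl points
  choose q hq hu using hpearl
  have qinj : Function.Injective q := by
    intro i i' h
    have h1 : p (q i) - x ∈ pearl k R (i:ℕ) := hq i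
    have h2 : p (q i) - x ∈ pearl k R (i':ℕ) := h ▸ hq i'
    exact Fin.ext (pearl_disjoint k hk0 R i.isLt i'.isLt h1 h2)
  -- the pearl points are exactly the points in the closed disk
  have hdistq : ∀ i : Fin k, dist x (p (q i)) ≤ R := by
    intro i
    rw [dist_eq_norm']
    exact (hq i).2.1
  set S := {j : Fin m // dist x (p j) ≤ R} with hS
  have hg : ∀ j : Fin m, dist x (p j) ≤ R → ∃ i : Fin k, q i = j := by
    intro j hj
    let g : Fin k → S := fun i => ⟨q i, hdistq i⟩
    have ginj : Function.Injective g := by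
      intro i i' h
      exact qinj (congrArg Subtype.val h)
    have hbij : Function.Bijective g := by
      rw [Nat.bijective_iff_injective_and_card]
      refine ⟨ginj, ?_⟩
      rw [hcard, Nat.card_eq_fintype_card, Fintype.card_fin]
    obtain ⟨i, hi⟩ := hbij.2 ⟨j, hj⟩
    exact ⟨i, congrArg Subtype.val hi⟩
  -- the cosine threshold
  set ξ := 2 * π / (3 * (k:ℝ)) with hξdef
  have hkR : (3:ℝ) ≤ k := by exact_mod_cast hk
  have hξ0 : 0 < ξ := by positivity
  have hξhalf : ξ ≤ π / 2 := by
    have h9 : 2 * π / (3 * (k:ℝ)) ≤ 2 * π / 9 :=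
      div_le_div_of_nonneg_left (by positivity) (by norm_num) (by linarith)
    rw [hξdef]; linarith [pi_pos]
  have hcosnn : 0 ≤ Real.cos ξ :=
    Real.cos_nonneg_of_mem_Icc ⟨by linarith [pi_pos], hξhalf⟩
  -- each pearl point is a Gabriel neighbor of x
  have hadj : ∀ i : Fin k, gabrielAdj (Fin.cons x p) 0 (q i).succ := by
    intro i
    refine ⟨(Fin.succ_ne_zero (q i)).symm, ?_⟩
    intro t ht0 htq
    obtain ⟨j', rfl⟩ := Fin.eq_succ_of_ne_zero ht0
    rw [Fin.cons_zero, Fin.cons_succ, Fin.cons_succ]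
    by_contra hcon
    push_neg at hcon
    set a : E2 := p (q i) - x with hadef
    set b : E2 := p j' - x with hbdef
    have hmid : midpoint ℝ x (p (q i)) = x + (2⁻¹:ℝ) • a := by
      rw [midpoint_eq_smul_add, invOf_eq_inv, hadef]
      module
    have hdm : dist (p j') (midpoint ℝ x (p (q i))) = ‖b - (2⁻¹:ℝ) • a‖ := by
      rw [dist_eq_norm, hmid, hbdef]
      congr 1
      abel
    have hdxa : dist x (p (q i)) = ‖a‖ := dist_eq_norm' x (p (q i))
    rw [hdm, hdxa] at hcon
    have hsq : ‖b - (2⁻¹:ℝ) • a‖ ^ 2 < (‖a‖ / 2) ^ 2 := by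
      apply pow_lt_pow_left₀ hcon (norm_nonneg _)
      norm_num
    rw [norm_sub_sq_real, real_inner_smul_right, norm_smul] at hsq
    have hkey : ‖b‖ ^ 2 < (inner ℝ b a : ℝ) := by
      have : ‖(2⁻¹:ℝ)‖ = 2⁻¹ := by norm_num
      rw [this] at hsq
      nlinarith
    -- b is nonzero and lies in the closed disk
    have hb0 : b ≠ 0 := sub_ne_zero.mpr (hx j')
    have hbpos : 0 < ‖b‖ := norm_pos_iff.mpr hb0
    have hiba : (inner ℝ b a : ℝ) ≤ ‖b‖ * ‖a‖ := real_inner_le_norm b a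
    have hba : ‖b‖ < ‖a‖ := by nlinarith
    have haR : ‖a‖ ≤ R := (hq i).2.1
    have hbdisk : dist x (p j') ≤ R := by
      rw [dist_eq_norm']
      exact (hba.trans_le haR).le
    -- hence b is a pearl point, in a pearl different from i
    obtain ⟨i', hi'⟩ := hg j' hbdisk
    have hne : (i':ℕ) ≠ (i:ℕ) := by
      intro h
      apply htq
      rw [show i' = i from Fin.ext h] at hi'
      rw [hi']
    have hbmem : b ∈ pearl k R (i':ℕ) := by rw [hbdef, ← hi']; exact hq i'
    have hamem : a ∈ pearl k R (i:ℕ) := hq i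
    -- the angular separation forces b out of the disk of diameter [x, p (q i)]
    have hrb : R * Real.cos ξ ≤ ‖b‖ := hbmem.1
    have hcos : Real.cos (polarAngle a - polarAngle b) ≤ Real.cos ξ :=
      cos_sep k hk i'.isLt i.isLt hne hbmem.2.2 hamem.2.2
    have hip : (inner ℝ b a : ℝ) = ‖b‖ * ‖a‖ * Real.cos (polarAngle a - polarAngle b) :=
      inner_polar b a
    have hub : (inner ℝ b a : ℝ) ≤ ‖b‖ * ‖a‖ * Real.cos ξ := by
      rw [hip]
      exact mul_le_mul_of_nonneg_left hcos (by positivity)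
    nlinarith
  -- conclude on the degree
  let F : Fin k → {j : Fin (m+1) // gabrielAdj (Fin.cons x p) 0 j} :=
    fun i => ⟨(q i).succ, hadj i⟩
  have hF : Function.Injective F := by
    intro i i' h
    exact qinj (Fin.succ_injective m (congrArg Subtype.val h))
  calc k = Nat.card (Fin k) := by rw [Nat.card_eq_fintype_card, Fintype.card_fin]
    _ ≤ gabrielDeg (Fin.cons x p) 0 := Nat.card_le_card_of_injective F hF
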